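/- Let G be a locally finite simple graph. A nonempty edge set D in the algebraic cycle space C_alg(G) is ⊆-minimal among nonempty elements of C_alg(G) if and only if D is a finite circuit of G or D is the edge set of a double ray of G. -/

import Mathlib

open Set

variable {V : Type*}

/-- The edge set of a cycle of `G` (a finite circuit). -/
def IsCircuit (G : SimpleGraph V) (C : Set (Sym2 V)) : Prop :=
  ∃ (v : V) (w : G.Walk v v), w.IsCycle ∧ C = {e | e ∈ w.edges}

/-- The cut `E(A, V∖A)`: edges of `G` with exactly one endvertex in `A`. -/
def cutEdges (G : SimpleGraph V) (A : Set V) : Set (Sym2 V) :=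
  {e | ∃ x y, G.Adj x y ∧ x ∈ A ∧ y ∉ A ∧ e = s(x, y)}

/-- `C` is a cut of `G`. -/
def IsCut (G : SimpleGraph V) (C : Set (Sym2 V)) : Prop :=
  ∃ A : Set V, C = cutEdges G A

/-- A bond is a ⊆-minimal nonempty cut. -/
def IsBond (G : SimpleGraph V) (B : Set (Sym2 V)) : Prop :=
  IsCut G B ∧ B ≠ ∅ ∧ ∀ C, IsCut G C → C ≠ ∅ → C ⊆ B → C = B

/-- Two edge sets are orthogonal: their intersection is finite and of even cardinality. -/
def EvenInter (D F : Set (Sym2 V)) : Prop :=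
  (D ∩ F).Finite ∧ Even (D ∩ F).ncard

/-- A ray in `G`. -/
def IsRay (G : SimpleGraph V) (R : ℕ → V) : Prop :=
  Function.Injective R ∧ ∀ n, G.Adj (R n) (R (n + 1))

/-- A double ray in `G`. -/
def IsDoubleRay (G : SimpleGraph V) (R : ℤ → V) : Prop :=
  Function.Injective R ∧ ∀ n, G.Adj (R n) (R (n + 1))

/-- The edge set of a double ray. -/
def doubleRayEdges (R : ℤ → V) : Set (Sym2 V) :=
  {e | ∃ n : ℤ, e = s(R n, R (n + 1))}

/-- `D` is the edge set of some double ray of `G`. -/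
def IsDoubleRayEdgeSet (G : SimpleGraph V) (D : Set (Sym2 V)) : Prop :=
  ∃ R : ℤ → V, IsDoubleRay G R ∧ D = doubleRayEdges R

/-- `a` and `b` are joined by a walk of `G` all of whose vertices avoid `S`,
i.e. they lie in a common component of `G − S`. -/
def ConnAvoiding (G : SimpleGraph V) (S : Set V) (a b : V) : Prop :=
  ∃ w : G.Walk a b, ∀ x ∈ w.support, x ∉ S

/-- `v` lies in `C(S,R)`, the component of `G − S` containing a tail of the ray `R`. -/
def InC (G : SimpleGraph V) (S : Set V) (R : ℕ → V) (v : V) : Prop :=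
  ∃ m : ℕ, (∀ n, R (m + n) ∉ S) ∧ ConnAvoiding G S v (R m)

/-- The rays `R` and `R'` are equivalent (lie in the same end): for every finite `S`
some component of `G − S` contains a tail of both. -/
def RayEquiv (G : SimpleGraph V) (R R' : ℕ → V) : Prop :=
  ∀ S : Set V, S.Finite → ∃ m m', (∀ n, R (m + n) ∉ S) ∧ (∀ n, R' (m' + n) ∉ S) ∧
    ConnAvoiding G S (R m) (R' m')

/-- The sequence `v` of vertices converges to the end of the ray `R`: for every finite `S`
all but finitely many `v i` lie in `C(S,R)`. -/
def ConvergesTo (G : SimpleGraph V) (R : ℕ → V) (v : ℕ → V) : Prop :=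
  ∀ S : Set V, S.Finite → {i : ℕ | ¬ InC G S R (v i)}.Finite

/-- `F` is the vertex set of a `k`-fan from `u` to `Y`: a union of `k` paths starting
at `u`, pairwise sharing no vertex other than `u`, ending in `k` distinct vertices of `Y`. -/
def IsFan (G : SimpleGraph V) (k : ℕ) (u : V) (Y : Set V) (F : Set V) : Prop :=
  ∃ (ends : Fin k → V) (P : ∀ i, G.Walk u (ends i)),
    (∀ i, (P i).IsPath) ∧ (∀ i, ends i ∈ Y) ∧ Function.Injective ends ∧
    (∀ i j, i ≠ j → ∀ x, x ∈ (P i).support → x ∈ (P j).support → x = u) ∧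
    F = ⋃ i, {x | x ∈ (P i).support}

/-- `L` is the vertex set of a `k`-linkage from `x` to `y`: a union of `k` paths from
`x` to `y` pairwise sharing no vertices other than `x` and `y`. -/
def IsLinkage (G : SimpleGraph V) (k : ℕ) (x y : V) (L : Set V) : Prop :=
  ∃ P : Fin k → G.Walk x y,
    (∀ i, (P i).IsPath) ∧ Function.Injective P ∧
    (∀ i j, i ≠ j → ∀ z, z ∈ (P i).support → z ∈ (P j).support → z = x ∨ z = y) ∧
    L = ⋃ i, {z | z ∈ (P i).support}

/-- The end represented by the ray `R` is `k`-padded: for every equivalent ray `R'`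
there is a finite `S` such that every vertex of `C(S,R')` admits a `k`-fan to the
image of `R'` in `G`. -/
def IsPaddedEnd (G : SimpleGraph V) (k : ℕ) (R : ℕ → V) : Prop :=
  ∀ R' : ℕ → V, IsRay G R' → RayEquiv G R R' →
    ∃ S : Set V, S.Finite ∧ ∀ v, InC G S R' v → ∃ F, IsFan G k v (Set.range R') F

/-- `G` is `k`-padded at infinity: every end of `G` is `k`-padded. -/
def PaddedAtInfinity (G : SimpleGraph V) (k : ℕ) : Prop :=
  ∀ R : ℕ → V, IsRay G R → IsPaddedEnd G k R

/-- `G` is `k`-connected: it has more than `k` vertices and deleting fewer than `k`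
vertices leaves it connected. -/
def KConnected (G : SimpleGraph V) (k : ℕ) : Prop :=
  (k : ℕ∞) < (Set.univ : Set V).encard ∧
  ∀ S : Set V, S.Finite → S.ncard < k → (G.induce (Sᶜ : Set V)).Connected

/-- The algebraic cycle space: edge sets meeting every vertex in an even number of edges. -/
def CAlg (G : SimpleGraph V) : Set (Set (Sym2 V)) :=
  {D | D ⊆ G.edgeSet ∧ ∀ v : V, {e ∈ D | v ∈ e}.Finite ∧ Even {e ∈ D | v ∈ e}.ncard}

/-- The finite-cycle space: symmetric-difference sums of finitely many finite circuits. -/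
def CFin (G : SimpleGraph V) : Set (Set (Sym2 V)) :=
  {D | ∃ l : List (Set (Sym2 V)), (∀ C ∈ l, IsCircuit G C) ∧ D = l.foldr symmDiff ∅}


namespace Stmt12Aux

open SimpleGraph

variable {V : Type*} {G : SimpleGraph V}

def walkOf (q : ℕ → V) (hq : ∀ n, G.Adj (q n) (q (n+1))) : (ℓ : ℕ) → G.Walk (q 0) (q ℓ)
  | 0 => .nil
  | (n+1) => (walkOf q hq n).concat (hq n)

lemma walkOf_support (q : ℕ → V) (hq : ∀ n, G.Adj (q n) (q (n+1))) (ℓ : ℕ) :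
    (walkOf q hq ℓ).support = (List.range (ℓ+1)).map q := by
  induction ℓ with
  | zero => simp [walkOf, List.range_succ]
  | succ n ih => simp [walkOf, ih, List.range_succ]

lemma walkOf_edges (q : ℕ → V) (hq : ∀ n, G.Adj (q n) (q (n+1))) (ℓ : ℕ) :
    (walkOf q hq ℓ).edges = (List.range ℓ).map (fun i => s(q i, q (i+1))) := by
  induction ℓ with
  | zero => simp [walkOf]
  | succ n ih => simp [walkOf, ih, List.range_succ]

lemma walkOf_length (q : ℕ → V) (hq : ∀ n, G.Adj (q n) (q (n+1))) (ℓ : ℕ) :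
    (walkOf q hq ℓ).length = ℓ := by
  induction ℓ with
  | zero => rfl
  | succ n ih => simp [walkOf, ih]

lemma support_eq_map_getVert {u v : V} (w : G.Walk u v) :
    w.support = (List.range (w.length + 1)).map w.getVert := by
  induction w with
  | nil => simp [List.range_succ]
  | cons h p ih =>
    rw [Walk.support_cons, ih, Walk.length_cons, List.range_succ_eq_map (n := p.length + 1),
      List.map_cons, List.map_map]
    simp [List.map_map, Function.comp_def, Walk.getVert_cons_succ, Walk.getVert_zero]

lemma edges_eq_map_getVert {u v : V} (w : G.Walk u v) :
    w.edges = (List.range w.length).map (fun i => s(w.getVert i, w.getVert (i+1))) := by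
  induction w with
  | nil => simp
  | cons h p ih =>
    rw [Walk.edges_cons, ih, Walk.length_cons, List.range_succ_eq_map, List.map_cons,
      List.map_map]
    simp [List.map_map, Function.comp_def, Walk.getVert_cons_succ, Walk.getVert_zero]


def Good (G : SimpleGraph V) (p : ℤ → V) : Prop :=
  (∀ i, G.Adj (p i) (p (i+1))) ∧ (∀ i, p (i+2) ≠ p i) ∧
    ∀ i j, p i = p j → ∀ k, p (i+k) = p (j+k)

def Ep (p : ℤ → V) : Set (Sym2 V) := {e | ∃ i : ℤ, e = s(p i, p (i+1))}

variable {G : SimpleGraph V} {p : ℤ → V}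

lemma good_incident (hg : Good G p) (i : ℤ) :
    {e ∈ Ep p | p i ∈ e} = {s(p (i-1), p i), s(p i, p (i+1))} := by
  obtain ⟨hadj, hnb, hkey⟩ := hg
  ext e
  constructor
  · rintro ⟨⟨j, rfl⟩, hm⟩
    rcases Sym2.mem_iff.mp hm with hm | hm
    · right
      have h0 := hkey j i hm.symm 0
      have h1 := hkey j i hm.symm 1
      simp only [add_zero] at h0
      rw [h0, h1]
      rfl
    · left
      have h0 := hkey (j+1) i hm.symm 0
      have h1 := hkey (j+1) i hm.symm (-1)
      simp only [add_zero] at h0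
      have e1 : j + 1 + (-1 : ℤ) = j := by ring
      have e2 : i + (-1 : ℤ) = i - 1 := by ring
      rw [e1, e2] at h1
      rw [h0, h1]
  · rintro (rfl | rfl)
    · exact ⟨⟨i - 1, by rw [sub_add_cancel]⟩, Sym2.mem_mk_right _ _⟩
    · exact ⟨⟨i, rfl⟩, Sym2.mem_mk_left _ _⟩

lemma good_pair_ne (hg : Good G p) (i : ℤ) :
    s(p (i-1), p i) ≠ s(p i, p (i+1)) := by
  intro hcon
  rcases Sym2.eq_iff.mp hcon with ⟨h1, h2⟩ | ⟨h1, _⟩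
  · exact (hg.1 i).ne h2
  · have := hg.2.1 (i - 1)
    rw [show i - 1 + 2 = i + 1 by ring] at this
    exact this h1.symm

lemma good_ncard (hg : Good G p) (i : ℤ) :
    {e ∈ Ep p | p i ∈ e}.ncard = 2 := by
  rw [good_incident hg i]
  exact Set.ncard_pair (good_pair_ne hg i)

lemma good_not_incident {v : V} (hv : ∀ i, v ≠ p i) :
    {e ∈ Ep p | v ∈ e} = ∅ := by
  ext e
  simp only [Set.mem_empty_iff_false, iff_false, Set.mem_setOf_eq, not_and]
  rintro ⟨j, rfl⟩ hm
  rcases Sym2.mem_iff.mp hm with hm | hm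
  · exact hv j hm
  · exact hv (j+1) hm

lemma good_calg (hg : Good G p) : Ep p ∈ CAlg G := by
  constructor
  · rintro e ⟨i, rfl⟩
    exact (hg.1 i)
  · intro v
    by_cases hv : ∃ i, v = p i
    · obtain ⟨i, rfl⟩ := hv
      rw [good_incident hg i]
      exact ⟨(Set.finite_singleton _).insert _, by
        rw [Set.ncard_pair (good_pair_ne hg i)]; exact even_two⟩
    · push_neg at hv
      rw [good_not_incident hv]
      simp

lemma good_conn (hg : Good G p) (i j : ℤ) :
    ∃ w : G.Walk (p i) (p j), ∀ e ∈ w.edges, e ∈ Ep p := by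
  have main : ∀ i j : ℤ, i ≤ j → ∃ w : G.Walk (p i) (p j), ∀ e ∈ w.edges, e ∈ Ep p := by
    intro i j hij
    set q : ℕ → V := fun n => p (i + n) with hqdef
    have hq : ∀ n, G.Adj (q n) (q (n+1)) := by
      intro n
      have := hg.1 (i + n)
      simpa [hqdef, add_assoc] using this
    have hstart : q 0 = p i := by simp [hqdef]
    have hend : q ((j - i).toNat) = p j := by
      show p (i + ((j - i).toNat : ℤ)) = p j
      congr 1
      omega
    refine ⟨((walkOf q hq ((j - i).toNat)).copy hstart hend), ?_⟩
    intro e he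
    rw [Walk.edges_copy, walkOf_edges] at he
    obtain ⟨a, _, rfl⟩ := List.mem_map.mp he
    refine ⟨i + a, ?_⟩
    simp only [hqdef]
    congr 1
    push_cast
    ring
  rcases le_total i j with h | h
  · exact main i j h
  · obtain ⟨w, hw⟩ := main j i h
    exact ⟨w.reverse, by
      intro e he
      rw [Walk.edges_reverse, List.mem_reverse] at he
      exact hw e he⟩

lemma sym2_exists_mem (e : Sym2 V) : ∃ x y, e = s(x, y) := by
  induction e using Sym2.ind with
  | _ x y => exact ⟨x, y, rfl⟩

lemma min_lemma {D : Set (Sym2 V)} (hD : D ∈ CAlg G)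
    (hdeg : ∀ (v : V) (e : Sym2 V), e ∈ D → v ∈ e → {e' ∈ D | v ∈ e'}.ncard = 2)
    (hconn : ∀ u v : V, (∃ e ∈ D, u ∈ e) → (∃ e ∈ D, v ∈ e) →
      ∃ w : G.Walk u v, ∀ e ∈ w.edges, e ∈ D) :
    ∀ N ∈ CAlg G, N ≠ ∅ → N ⊆ D → N = D := by
  intro N hN hNne hNsub
  have claim1 : ∀ e ∈ D, ∀ u, u ∈ e → (∃ f ∈ N, u ∈ f) → e ∈ N := by
    rintro e he u hu ⟨f, hf, huf⟩
    have hsub : {e' ∈ N | u ∈ e'} ⊆ {e' ∈ D | u ∈ e'} := by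
      rintro x ⟨hx, hxu⟩; exact ⟨hNsub hx, hxu⟩
    have hDfin : {e' ∈ D | u ∈ e'}.Finite := (hD.2 u).1
    have hNfin : {e' ∈ N | u ∈ e'}.Finite := hDfin.subset hsub
    have hpos : 0 < {e' ∈ N | u ∈ e'}.ncard :=
      (Set.ncard_pos hNfin).mpr ⟨f, hf, huf⟩
    have heven := (hN.2 u).2
    have hle : {e' ∈ N | u ∈ e'}.ncard ≤ {e' ∈ D | u ∈ e'}.ncard :=
      Set.ncard_le_ncard hsub hDfin
    have h2 : {e' ∈ D | u ∈ e'}.ncard = 2 := hdeg u e he hu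
    have hge : {e' ∈ D | u ∈ e'}.ncard ≤ {e' ∈ N | u ∈ e'}.ncard := by
      obtain ⟨k, hk⟩ := heven; omega
    have heq := Set.eq_of_subset_of_ncard_le hsub hge hDfin
    have : e ∈ {e' ∈ N | u ∈ e'} := heq ▸ (⟨he, hu⟩ : e ∈ {e' ∈ D | u ∈ e'})
    exact this.1
  have claim2 : ∀ {x y : V} (w : G.Walk x y), (∀ e ∈ w.edges, e ∈ D) →
      (∃ f ∈ N, x ∈ f) → (∃ f ∈ N, y ∈ f) := by
    intro x y w
    induction w with
    | nil => exact fun _ h => h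
    | @cons a b c h q ih =>
      intro hed hx
      have he : s(a, b) ∈ D := hed _ (by rw [Walk.edges_cons]; exact List.mem_cons_self)
      have hN1 : s(a, b) ∈ N := claim1 _ he _ (Sym2.mem_mk_left _ _) hx
      exact ih (fun e hme => hed e (by rw [Walk.edges_cons]; exact List.mem_cons_of_mem _ hme))
        ⟨_, hN1, Sym2.mem_mk_right _ _⟩
  apply Set.Subset.antisymm hNsub
  intro e he
  obtain ⟨f₀, hf₀⟩ := Set.nonempty_iff_ne_empty.mpr hNne
  obtain ⟨a, b, rfl⟩ := sym2_exists_mem f₀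
  obtain ⟨x, y, rfl⟩ := sym2_exists_mem e
  obtain ⟨w, hw⟩ := hconn a x ⟨s(a, b), hNsub hf₀, Sym2.mem_mk_left _ _⟩
    ⟨s(x, y), he, Sym2.mem_mk_left _ _⟩
  have htx := claim2 w hw ⟨s(a, b), hf₀, Sym2.mem_mk_left _ _⟩
  exact claim1 _ he _ (Sym2.mem_mk_left _ _) htx

lemma good_pmod (hg : Good G p) {ℓ : ℤ} (hl : 0 < ℓ) (hper : p ℓ = p 0) (i : ℤ) :
    p i = p (i % ℓ) := by
  have per : ∀ k : ℤ, p (k + ℓ) = p k := by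
    intro k
    have := hg.2.2 ℓ 0 hper k
    simpa [add_comm] using this
  have per' : ∀ k : ℤ, p (k - ℓ) = p k := by
    intro k
    have h := per (k - ℓ)
    rw [sub_add_cancel] at h
    exact h.symm
  have aux : ∀ m : ℤ, ∀ k : ℤ, p (k + m * ℓ) = p k := by
    intro m
    induction m using Int.induction_on with
    | zero => simp
    | succ n ih =>
      intro k
      have : k + (n + 1 : ℤ) * ℓ = (k + n * ℓ) + ℓ := by ring
      rw [this, per, ih]
    | pred n ih =>
      intro k
      have : k + (-n - 1 : ℤ) * ℓ = (k + (-n : ℤ) * ℓ) - ℓ := by ring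
      rw [this, per', ih]
  have : i = i % ℓ + (i / ℓ) * ℓ := by
    rw [mul_comm]
    exact (Int.emod_add_mul_ediv i ℓ).symm
  calc p i = p (i % ℓ + (i / ℓ) * ℓ) := by rw [← this]
    _ = p (i % ℓ) := aux _ _

lemma circuit_of_good (hg : Good G p) {ℓ : ℤ} (h3 : 3 ≤ ℓ) (hper : p ℓ = p 0)
    (hinj : ∀ a b : ℤ, 0 ≤ a → a < ℓ → 0 ≤ b → b < ℓ → p a = p b → a = b) :
    IsCircuit G (Ep p) := by
  set n : ℕ := ℓ.toNat with hn
  have hnl : (n : ℤ) = ℓ := Int.toNat_of_nonneg (by omega)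
  have h3n : 3 ≤ n := by omega
  set q : ℕ → V := fun m => p m with hqdef
  have qinj : ∀ a b : ℕ, a < n → b < n → q a = q b → a = b := by
    intro a b ha hb h
    have := hinj a b (by positivity) (by omega) (by positivity) (by omega) h
    omega
  have hq : ∀ m : ℕ, G.Adj (q m) (q (m+1)) := by
    intro m
    have := hg.1 m
    simpa [hqdef] using this
  have hqn : q n = q 0 := by
    simp only [hqdef]
    rw [show ((n : ℕ) : ℤ) = ℓ from hnl, hper]
    norm_num
  set w0 := walkOf q hq n with hw0
  set w := w0.copy rfl hqn with hwdef
  have hwedges : w.edges = (List.range n).map (fun i => s(q i, q (i+1))) := by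
    rw [hwdef, Walk.edges_copy, hw0, walkOf_edges]
  have hwsup : w.support = (List.range (n+1)).map q := by
    rw [hwdef, Walk.support_copy, hw0, walkOf_support]
  have hwlen : w.length = n := by
    rw [hwdef, Walk.length_copy, hw0, walkOf_length]
  have hcyc : w.IsCycle := by
    rw [Walk.isCycle_def]
    refine ⟨⟨?_⟩, ?_, ?_⟩
    · -- edges nodup
      rw [hwedges]
      refine List.Nodup.map_on ?_ List.nodup_range
      intro a ha b hb hab
      rw [List.mem_range] at ha hb
      rcases Sym2.eq_iff.mp hab with ⟨h1, h2⟩ | ⟨h1, h2⟩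
      · exact qinj a b ha hb h1
      · -- q a = q (b+1), q (a+1) = q b
        by_cases hb1 : b + 1 < n
        · have hab1 : a = b + 1 := qinj a (b+1) ha hb1 h1
          by_cases ha1 : a + 1 < n
          · have : a + 1 = b := qinj (a+1) b ha1 hb h2
            omega
          · -- a + 1 = n, so b + 2 = n; then q n = q b, i.e. q 0 = q b
            have han : a + 1 = n := by omega
            have : q 0 = q b := by
              rw [← hqn, ← han]; exact h2
            have := qinj 0 b (by omega) hb this
            omega
        · have hbn : b + 1 = n := by omega
          have h1' : q a = q 0 := by rw [← hqn, ← hbn]; exact h1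
          have ha0 : a = 0 := qinj a 0 ha (by omega) h1'
          by_cases ha1 : a + 1 < n
          · have : a + 1 = b := qinj (a+1) b ha1 hb h2
            omega
          · omega
    · -- nonempty
      intro hnil
      have : w.length = 0 := by rw [hnil]; rfl
      omega
    · -- support tail nodup
      rw [hwsup, List.range_succ_eq_map, List.map_cons, List.tail_cons, List.map_map]
      refine List.Nodup.map_on ?_ List.nodup_range
      intro a ha b hb hab
      rw [List.mem_range] at ha hb
      simp only [Function.comp] at hab
      by_cases ha1 : a + 1 < n
      · by_cases hb1 : b + 1 < n
        · exact Nat.succ_injective (qinj _ _ ha1 hb1 hab)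
        · have hbn : b + 1 = n := by omega
          have : q (a+1) = q 0 := by rw [← hqn, ← hbn]; exact hab
          have := qinj (a+1) 0 ha1 (by omega) this
          omega
      · have han : a + 1 = n := by omega
        by_cases hb1 : b + 1 < n
        · have : q 0 = q (b+1) := by rw [← hqn, ← han]; exact hab
          have := qinj 0 (b+1) (by omega) hb1 this
          omega
        · omega
  refine ⟨q 0, w, hcyc, ?_⟩
  ext e
  simp only [Set.mem_setOf_eq, hwedges, List.mem_map, List.mem_range]
  constructor
  · rintro ⟨i, rfl⟩
    have hl0 : (0 : ℤ) < ℓ := by omega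
    set r : ℤ := i % ℓ with hr
    have hr0 : 0 ≤ r := Int.emod_nonneg i (by omega)
    have hrl : r < ℓ := Int.emod_lt_of_pos i hl0
    have hpi : p i = p r := good_pmod hg hl0 hper i
    have hpi1 : p (i+1) = p (r+1) := by
      have e1 : p (i+1) = p ((i+1) % ℓ) := good_pmod hg hl0 hper (i+1)
      have e2 : p (r+1) = p ((r+1) % ℓ) := good_pmod hg hl0 hper (r+1)
      have hrr : r % ℓ = r := Int.emod_eq_of_lt hr0 hrl
      have hmod : i ≡ r [ZMOD ℓ] := by
        show i % ℓ = r % ℓ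
        rw [hrr, hr]
      have hmeq : (i+1) % ℓ = (r+1) % ℓ := Int.ModEq.add_right 1 hmod
      rw [e1, hmeq, ← e2]
    refine ⟨r.toNat, by omega, ?_⟩
    rw [hpi, hpi1]
    have hc1 : q r.toNat = p r := by
      simp only [hqdef]; congr 1; omega
    have hc2 : q (r.toNat + 1) = p (r + 1) := by
      simp only [hqdef]; congr 1; omega
    rw [hc1, hc2]
  · rintro ⟨a, ha, rfl⟩
    refine ⟨(a : ℤ), ?_⟩
    have hc1 : q a = p (a : ℤ) := rfl
    have hc2 : q (a+1) = p ((a : ℤ)+1) := by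
      simp only [hqdef]
      congr 1
    rw [hc1, hc2]

lemma wrap (q : ℕ → V) (n : ℕ) (h3 : 3 ≤ n) (E0 : Set (Sym2 V)) (hE : E0 ⊆ G.edgeSet)
    (hq : ∀ a : ℕ, a < n → s(q a, q (a+1)) ∈ E0)
    (hqn : q n = q 0)
    (qinj : ∀ i j : ℕ, i < n → j < n → q i = q j → i = j) :
    ∃ p : ℤ → V, Good G p ∧ Ep p = {e | ∃ a : ℕ, a < n ∧ e = s(q a, q (a+1))} ∧
      IsCircuit G (Ep p) := by
  set L : ℤ := (n : ℤ) with hL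
  have hL3 : 3 ≤ L := by omega
  set p : ℤ → V := fun k => q ((k % L).toNat) with hp
  have hres : ∀ k : ℤ, 0 ≤ k % L ∧ k % L < L := fun k =>
    ⟨Int.emod_nonneg k (by omega), Int.emod_lt_of_pos k (by omega)⟩
  have htlt : ∀ k : ℤ, (k % L).toNat < n := by
    intro k
    have := hres k
    omega
  have hmodeq : ∀ a b : ℤ, a % L = b % L → ∀ k : ℤ, (a + k) % L = (b + k) % L := by
    intro a b hab k
    exact Int.ModEq.add_right k hab
  have hstep : ∀ k : ℤ, p (k + 1) = q ((k % L).toNat + 1) := by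
    intro k
    set t := (k % L).toNat with ht
    have htk : (t : ℤ) = k % L := by
      have := hres k
      omega
    have h1 : (k + 1) % L = ((t : ℤ) + 1) % L := by
      apply hmodeq
      rw [htk]
      exact (Int.emod_emod_of_dvd k dvd_rfl).symm
    by_cases hc : t + 1 < n
    · have h2 : (k + 1) % L = (t + 1 : ℤ) := by
        rw [h1]
        exact Int.emod_eq_of_lt (by omega) (by omega)
      show q (((k + 1) % L).toNat) = q (t + 1)
      rw [h2, show ((t:ℤ) + 1).toNat = t + 1 by omega]
    · have htn : t + 1 = n := by have := htlt k; omega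
      have h2 : (k + 1) % L = 0 := by
        rw [h1, show ((t:ℤ) + 1) = L by omega]
        exact Int.emod_self
      show q (((k + 1) % L).toNat) = q (t + 1)
      rw [h2]
      show q 0 = q (t + 1)
      rw [htn, hqn]
  have hpt : ∀ k : ℤ, p k = q ((k % L).toNat) := fun _ => rfl
  have hadj : ∀ k : ℤ, G.Adj (p k) (p (k + 1)) := by
    intro k
    rw [hpt, hstep]
    exact (G.mem_edgeSet).mp (hE (hq _ (htlt k)))
  have hgood : Good G p := by
    refine ⟨hadj, ?_, ?_⟩
    · intro k hk
      have h2 : (k + 2) % L = k % L := by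
        have e1 : p (k+2) = q (((k+2) % L).toNat) := hpt _
        have e2 : p k = q ((k % L).toNat) := hpt _
        rw [e1, e2] at hk
        have := qinj _ _ (htlt (k+2)) (htlt k) hk
        have h1 := hres (k+2)
        have h2 := hres k
        omega
      have : L ∣ ((k + 2) - k) := Int.ModEq.dvd (Int.ModEq.symm (h2 : Int.ModEq L (k+2) k))
      rw [show (k + 2) - k = 2 by ring] at this
      have := Int.le_of_dvd (by omega) this
      omega
    · intro a b hab k
      have hres1 := hres a
      have hres2 := hres b
      have : (a % L).toNat = (b % L).toNat := by
        rw [hpt, hpt] at hab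
        exact qinj _ _ (htlt a) (htlt b) hab
      have hmod : a % L = b % L := by omega
      rw [hpt, hpt, hmodeq a b hmod k]
  have hchar : Ep p = {e | ∃ a : ℕ, a < n ∧ e = s(q a, q (a+1))} := by
    ext e
    constructor
    · rintro ⟨k, rfl⟩
      exact ⟨(k % L).toNat, htlt k, by rw [hpt, hstep]⟩
    · rintro ⟨a, ha, rfl⟩
      refine ⟨(a : ℤ), ?_⟩
      have e1 : p (a : ℤ) = q a := by
        rw [hpt]
        congr 1
        rw [Int.emod_eq_of_lt (by omega) (by omega)]
        omega
      have e2 : p ((a : ℤ) + 1) = q (a + 1) := by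
        rw [hstep]
        congr 1
        rw [Int.emod_eq_of_lt (by omega) (by omega)]
        omega
      rw [e1, e2]
  refine ⟨p, hgood, hchar, ?_⟩
  apply circuit_of_good hgood hL3
  · show q ((L % L).toNat) = q ((0 % L).toNat)
    rw [Int.emod_self, Int.zero_emod]
  · intro a b ha0 hal hb0 hbl hab
    rw [hpt, hpt, Int.emod_eq_of_lt ha0 hal, Int.emod_eq_of_lt hb0 hbl] at hab
    have := qinj _ _ (by omega) (by omega) hab
    omega

lemma good_of_circuit {D : Set (Sym2 V)} (hC : IsCircuit G D) :
    ∃ p : ℤ → V, Good G p ∧ D = Ep p := by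
  obtain ⟨v, w, hcyc, hDE⟩ := hC
  set n := w.length with hn
  have h3 : 3 ≤ n := hcyc.three_le_length
  set q : ℕ → V := w.getVert with hqdef
  have hedg : w.edges = (List.range n).map (fun i => s(q i, q (i+1))) :=
    edges_eq_map_getVert w
  have hsup : w.support = (List.range (n+1)).map q := support_eq_map_getVert w
  have hq0 : q n = q 0 := by
    rw [hqdef]
    rw [Walk.getVert_length, Walk.getVert_zero]
  have htinj : ∀ i j : ℕ, i < n → j < n → q (i+1) = q (j+1) → i = j := by
    have hnd := hcyc.support_nodup
    rw [hsup, List.range_succ_eq_map, List.map_cons, List.tail_cons, List.map_map] at hnd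
    intro i j hi hj hij
    exact List.inj_on_of_nodup_map hnd (List.mem_range.mpr hi) (List.mem_range.mpr hj)
      (by simpa [Function.comp] using hij)
  have qinj : ∀ i j : ℕ, i < n → j < n → q i = q j → i = j := by
    intro i j hi hj hij
    rcases Nat.eq_zero_or_pos i with rfl | hi0
    · rcases Nat.eq_zero_or_pos j with rfl | hj0
      · rfl
      · exfalso
        have : q ((n-1)+1) = q ((j-1)+1) := by
          rw [show (n-1)+1 = n by omega, hq0, show (j-1)+1 = j by omega]
          exact hij
        have := htinj (n-1) (j-1) (by omega) (by omega) this
        omega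
    · rcases Nat.eq_zero_or_pos j with rfl | hj0
      · exfalso
        have : q ((i-1)+1) = q ((n-1)+1) := by
          rw [show (i-1)+1 = i by omega, show (n-1)+1 = n by omega, hq0]
          exact hij
        have := htinj (i-1) (n-1) (by omega) (by omega) this
        omega
      · have : q ((i-1)+1) = q ((j-1)+1) := by
          rw [show (i-1)+1 = i by omega, show (j-1)+1 = j by omega]
          exact hij
        have := htinj (i-1) (j-1) (by omega) (by omega) this
        omega
  have hqe : ∀ a : ℕ, a < n → s(q a, q (a+1)) ∈ D := by
    intro a ha
    rw [hDE]
    show _ ∈ w.edges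
    rw [hedg]
    exact List.mem_map.mpr ⟨a, List.mem_range.mpr ha, rfl⟩
  have hEsub : D ⊆ G.edgeSet := by
    rw [hDE]
    intro e he
    exact w.edges_subset_edgeSet he
  obtain ⟨p, hgood, hchar, _⟩ := wrap q n h3 D hEsub hqe hq0 qinj
  refine ⟨p, hgood, ?_⟩
  rw [hchar, hDE]
  ext e
  simp only [Set.mem_setOf_eq, hedg, List.mem_map, List.mem_range]
  constructor
  · rintro ⟨a, ha, rfl⟩
    exact ⟨a, ha, rfl⟩
  · rintro ⟨a, ha, rfl⟩
    exact ⟨a, ha, rfl⟩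

lemma min_of_good {D : Set (Sym2 V)} (hD : D ∈ CAlg G) {p : ℤ → V} (hg : Good G p)
    (hDE : D = Ep p) :
    ∀ N ∈ CAlg G, N ≠ ∅ → N ⊆ D → N = D := by
  subst hDE
  apply min_lemma hD
  · intro v e he hv
    obtain ⟨j, rfl⟩ := he
    rcases Sym2.mem_iff.mp hv with rfl | rfl
    · exact good_ncard hg j
    · exact good_ncard hg (j+1)
  · intro u v hu hv
    obtain ⟨i, hi⟩ : ∃ i, u = p i := by
      obtain ⟨e, ⟨j, rfl⟩, hu⟩ := hu
      rcases Sym2.mem_iff.mp hu with h | h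
      exacts [⟨j, h⟩, ⟨j+1, h⟩]
    obtain ⟨i', hi'⟩ : ∃ i, v = p i := by
      obtain ⟨e, ⟨j, rfl⟩, hv⟩ := hv
      rcases Sym2.mem_iff.mp hv with h | h
      exacts [⟨j, h⟩, ⟨j+1, h⟩]
    subst hi hi'
    exact good_conn hg i i'

lemma exists_next {D : Set (Sym2 V)} (hD : D ∈ CAlg G) {u v : V} (h : s(u, v) ∈ D) :
    ∃ w, w ≠ u ∧ s(v, w) ∈ D := by
  have hfin := (hD.2 v).1
  have heven := (hD.2 v).2
  have hmem : s(u, v) ∈ {e ∈ D | v ∈ e} := ⟨h, Sym2.mem_mk_right _ _⟩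
  have hpos : 0 < {e ∈ D | v ∈ e}.ncard := (Set.ncard_pos hfin).mpr ⟨_, hmem⟩
  have h2 : 1 < {e ∈ D | v ∈ e}.ncard := by
    obtain ⟨k, hk⟩ := heven; omega
  obtain ⟨e', he', hne⟩ := Set.exists_ne_of_one_lt_ncard h2 (s(u, v))
  obtain ⟨w, hw⟩ := Sym2.mem_iff_exists.mp he'.2
  refine ⟨w, ?_, hw ▸ he'.1⟩
  rintro rfl
  exact hne (by rw [hw, Sym2.eq_swap])

open Classical in
noncomputable def nxt (D : Set (Sym2 V)) (u v : V) : V :=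
  if h : ∃ w, w ≠ u ∧ s(v, w) ∈ D then h.choose else u

lemma nxt_spec {D : Set (Sym2 V)} (hD : D ∈ CAlg G) {u v : V} (h : s(u, v) ∈ D) :
    nxt D u v ≠ u ∧ s(v, nxt D u v) ∈ D := by
  have hex := exists_next hD h
  rw [nxt, dif_pos hex]
  exact hex.choose_spec

noncomputable def seqP (D : Set (Sym2 V)) (a b : V) : ℕ → V × V
  | 0 => (a, b)
  | n+1 => ((seqP D a b n).2, nxt D (seqP D a b n).1 (seqP D a b n).2)

noncomputable def seq (D : Set (Sym2 V)) (a b : V) (n : ℕ) : V := (seqP D a b n).1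

lemma seq_zero (D : Set (Sym2 V)) (a b : V) : seq D a b 0 = a := rfl

lemma seq_one (D : Set (Sym2 V)) (a b : V) : seq D a b 1 = b := rfl

lemma seq_add_two (D : Set (Sym2 V)) (a b : V) (n : ℕ) :
    seq D a b (n+2) = nxt D (seq D a b n) (seq D a b (n+1)) := by
  show (seqP D a b (n+2)).1 = _
  have h1 : (seqP D a b (n+2)).1 = (seqP D a b (n+1)).2 := rfl
  have h2 : (seqP D a b (n+1)).2 = nxt D (seqP D a b n).1 (seqP D a b n).2 := rfl
  have h3 : seq D a b (n+1) = (seqP D a b n).2 := rfl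
  rw [h1, h2, h3]
  rfl

lemma seq_edge {D : Set (Sym2 V)} (hD : D ∈ CAlg G) {a b : V} (hab : s(a, b) ∈ D) :
    ∀ n, s(seq D a b n, seq D a b (n+1)) ∈ D := by
  intro n
  induction n with
  | zero => exact hab
  | succ m ih =>
    rw [show m + 1 + 1 = m + 2 by omega, seq_add_two]
    exact (nxt_spec hD ih).2

lemma seq_nb {D : Set (Sym2 V)} (hD : D ∈ CAlg G) {a b : V} (hab : s(a, b) ∈ D) :
    ∀ n, seq D a b (n+2) ≠ seq D a b n := by
  intro n
  rw [seq_add_two]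
  exact (nxt_spec hD (seq_edge hD hab n)).1

lemma find_sub {D : Set (Sym2 V)} (hD : D ∈ CAlg G) (hne : D ≠ ∅) :
    ∃ C, C ⊆ D ∧ C ∈ CAlg G ∧ C ≠ ∅ ∧ (IsCircuit G C ∨ IsDoubleRayEdgeSet G C) := by
  classical
  obtain ⟨e₀, he₀⟩ := Set.nonempty_iff_ne_empty.mpr hne
  obtain ⟨a, b, rfl⟩ := sym2_exists_mem e₀
  have hba : s(b, a) ∈ D := by rwa [Sym2.eq_swap]
  set A := seq D a b with hA'
  set B := seq D b a with hB'
  set h : ℤ → V := fun i => if 0 ≤ i then A i.toNat else B (1 - i).toNat with hh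
  have hA : ∀ i : ℤ, 0 ≤ i → h i = A i.toNat := by
    intro i hi
    simp only [hh, if_pos hi]
  have hB : ∀ i : ℤ, i ≤ 1 → h i = B (1 - i).toNat := by
    intro i hi
    rcases lt_or_ge i 0 with hi0 | hi0
    · simp only [hh, if_neg (by omega : ¬ (0:ℤ) ≤ i)]
    · interval_cases i
      · show A 0 = B 1
        rfl
      · show A 1 = B 0
        rfl
  have hedge : ∀ i : ℤ, s(h i, h (i+1)) ∈ D := by
    intro i
    rcases le_or_gt 0 i with hi | hi
    · rw [hA i hi, hA (i+1) (by omega), show (i+1).toNat = i.toNat + 1 by omega]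
      exact seq_edge hD he₀ i.toNat
    · rw [hB i (by omega), hB (i+1) (by omega),
        show (1 - i).toNat = (-i).toNat + 1 by omega,
        show (1 - (i+1)).toNat = (-i).toNat by omega, Sym2.eq_swap]
      exact seq_edge hD hba (-i).toNat
  have hadjh : ∀ i : ℤ, G.Adj (h i) (h (i+1)) := fun i => (G.mem_edgeSet).mp (hD.1 (hedge i))
  have hnb : ∀ i : ℤ, h (i+2) ≠ h i := by
    intro i
    rcases le_or_gt 0 i with hi | hi
    · rw [hA i hi, hA (i+2) (by omega), show (i+2).toNat = i.toNat + 2 by omega]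
      exact seq_nb hD he₀ i.toNat
    · rw [hB i (by omega), hB (i+2) (by omega),
        show (1 - i).toNat = (1 - (i+2)).toNat + 2 by omega]
      exact (seq_nb hD hba (1 - (i+2)).toNat).symm
  by_cases hinj : Function.Injective h
  · refine ⟨Ep h, ?_, good_calg ⟨hadjh, hnb, ?_⟩, ?_, Or.inr ⟨h, ⟨hinj, hadjh⟩, rfl⟩⟩
    · rintro e ⟨i, rfl⟩
      exact hedge i
    · intro i j hij k
      rw [hinj hij]
    · apply Set.nonempty_iff_ne_empty.mp
      exact ⟨_, ⟨0, rfl⟩⟩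
  · have hT : ∃ d : ℕ, 0 < d ∧ ∃ i₀ : ℤ, h (i₀ + d) = h i₀ := by
      rw [Function.Injective] at hinj
      push_neg at hinj
      obtain ⟨x, y, hxy, hne'⟩ := hinj
      rcases lt_or_gt_of_ne hne' with hlt | hlt
      · exact ⟨(y - x).toNat, by omega, x, by
          rw [show x + ((y - x).toNat : ℤ) = y by omega]; exact hxy.symm⟩
      · exact ⟨(x - y).toNat, by omega, y, by
          rw [show y + ((x - y).toNat : ℤ) = x by omega]; exact hxy⟩
    set n := Nat.find hT with hn
    have hspec := Nat.find_spec hT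
    rw [← hn] at hspec
    obtain ⟨hnpos, i₀, hi₀⟩ := hspec
    have h3 : 3 ≤ n := by
      have hn1 : n ≠ 1 := by
        intro h1
        rw [h1] at hi₀
        exact (hadjh i₀).ne (by push_cast at hi₀; rw [hi₀])
      have hn2 : n ≠ 2 := by
        intro h2
        rw [h2] at hi₀
        exact hnb i₀ (by push_cast at hi₀; exact_mod_cast hi₀)
      omega
    have winj : ∀ x y : ℤ, i₀ ≤ x → x < i₀ + n → i₀ ≤ y → y < i₀ + n → h x = h y → x = y := by
      intro x y hx1 hx2 hy1 hy2 hxy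
      by_contra hne'
      have key : ∀ u w : ℤ, u < w → i₀ ≤ u → w < i₀ + n → h u = h w → False := by
        intro u w huw hu hw huv
        have hd : (w - u).toNat < n := by omega
        exact Nat.find_min hT (by rw [← hn]; exact hd) ⟨by omega, u, by
          rw [show u + ((w - u).toNat : ℤ) = w by omega]; exact huv.symm⟩
      rcases lt_or_gt_of_ne hne' with hlt | hlt
      · exact (key x y hlt hx1 hy2 hxy).elim
      · exact (key y x hlt hy1 hx2 hxy.symm).elim
    obtain ⟨p, hgood, hchar, hcirc⟩ := wrap (fun m : ℕ => h (i₀ + m)) n h3 D hD.1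
      (fun m hm => by
        have := hedge (i₀ + m)
        rw [show (i₀ + m) + 1 = i₀ + ((m + 1 : ℕ) : ℤ) by push_cast; ring] at this
        exact this)
      (by
        show h (i₀ + (n : ℤ)) = h (i₀ + ((0:ℕ) : ℤ))
        rw [hi₀]
        norm_num)
      (fun x y hx hy hxy => by
        have := winj (i₀ + x) (i₀ + y) (by omega) (by omega) (by omega) (by omega) hxy
        omega)
    refine ⟨Ep p, ?_, good_calg hgood, ?_, Or.inl hcirc⟩
    · rw [hchar]
      rintro e ⟨m, hm, rfl⟩
      have := hedge (i₀ + m)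
      rw [show (i₀ + m) + 1 = i₀ + ((m + 1 : ℕ) : ℤ) by push_cast; ring] at this
      exact this
    · apply Set.nonempty_iff_ne_empty.mp
      rw [hchar]
      exact ⟨_, 0, by omega, rfl⟩

end Stmt12Aux

/-- In a locally finite graph, a nonempty element of the algebraic cycle space is
⊆-minimal among nonempty elements iff it is a finite circuit or the edge set of a
double ray. -/
theorem stmt_12 (G : SimpleGraph V) (hlf : ∀ x : V, (G.neighborSet x).Finite)
    (D : Set (Sym2 V)) (hD : D ∈ CAlg G) (hne : D ≠ ∅) :
    (∀ N ∈ CAlg G, N ≠ ∅ → N ⊆ D → N = D) ↔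
      (IsCircuit G D ∨ IsDoubleRayEdgeSet G D) := by
  constructor
  · intro hmin
    obtain ⟨C, hCD, hCalg, hCne, hC⟩ := Stmt12Aux.find_sub hD hne
    have hCeq := hmin C hCalg hCne hCD
    rw [← hCeq]
    exact hC
  · rintro (hC | hR)
    · obtain ⟨p, hg, hDE⟩ := Stmt12Aux.good_of_circuit hC
      exact Stmt12Aux.min_of_good hD hg hDE
    · obtain ⟨R, ⟨hRinj, hRadj⟩, hDE⟩ := hR
      have hg : Stmt12Aux.Good G R :=
        ⟨hRadj, fun i hc => by have := hRinj hc; omega,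
          fun i j hij k => by rw [hRinj hij]⟩
      exact Stmt12Aux.min_of_good hD hg hDE
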